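/- Let T > 0, let f : ℝ → ℝ be a continuous T-periodic function, and let α ∈ (0,1). If the function t ↦ I^α f(t) is bounded on (0,∞), then I^α f is asymptotically T-periodic: there exists a continuous T-periodic function Φ : ℝ → ℝ such that lim_{t→+∞} [I^α f(t) − Φ(t)] = 0. -/

import Mathlib

open MeasureTheory intervalIntegral Filter Set

lemma bdd_of_periodic {h : ℝ → ℝ} (hc : Continuous h) {T : ℝ} (hT : 0 < T)
    (hp : Function.Periodic h T) : ∃ C : ℝ, 0 ≤ C ∧ ∀ x, |h x| ≤ C := by
  obtain ⟨C, hC⟩ := (isCompact_Icc (a := (0:ℝ)) (b := T)).exists_bound_of_continuousOn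
    hc.continuousOn
  refine ⟨max C 0, le_max_right _ _, fun x => ?_⟩
  obtain ⟨y, hy, hxy⟩ := hp.exists_mem_Ico₀ hT x
  rw [hxy]
  calc |h y| = ‖h y‖ := (Real.norm_eq_abs _).symm
  _ ≤ C := hC y ⟨hy.1, hy.2.le⟩
  _ ≤ max C 0 := le_max_left _ _

lemma tendsto_intervalIntegral_left {h : ℝ → ℝ} {t : ℝ} (ht : 0 < t)
    (hint : IntervalIntegrable h volume 0 t) :
    Tendsto (fun ε => ∫ u in ε..t, h u) (nhdsWithin 0 (Ioi 0))
      (nhds (∫ u in (0:ℝ)..t, h u)) := by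
  have hint' : IntervalIntegrable h volume (min t 0) (max t t) := by
    rw [min_comm, min_eq_left ht.le, max_self]
    exact hint
  have cw : ContinuousWithinAt (fun b => ∫ x in t..b, h x) (Icc 0 t) 0 :=
    intervalIntegral.continuousWithinAt_primitive (measure_singleton 0) hint'
  have cw' : Tendsto (fun b => ∫ x in t..b, h x) (nhdsWithin 0 (Ioi 0))
      (nhds (∫ x in t..(0:ℝ), h x)) := by
    rw [← nhdsWithin_Ioo_eq_nhdsGT ht]
    exact cw.tendsto.mono_left (nhdsWithin_mono _ Ioo_subset_Icc_self)
  have := cw'.neg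
  rw [← intervalIntegral.integral_symm] at this
  simpa only [intervalIntegral.integral_symm t] using this

lemma ibp_key {α : ℝ} (hα0 : 0 < α) (hα1 : α < 1) {g F : ℝ → ℝ}
    (hg : Continuous g) (hF : ∀ x, HasDerivAt F (g x) x) (hF0 : F 0 = 0)
    {L : ℝ} (hLip : ∀ a b : ℝ, |F b - F a| ≤ L * |b - a|)
    {t : ℝ} (ht : 0 < t) :
    ∫ s in (0:ℝ)..t, (t - s) ^ (α - 1) * g s
      = t ^ (α - 1) * F t
        + (α - 1) * ∫ u in (0:ℝ)..t, u ^ (α - 2) * (F (t - u) - F t) := by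
  have hFc : Continuous F := by
    rw [continuous_iff_continuousAt]; exact fun x => (hF x).continuousAt
  have hL : 0 ≤ L := by
    have h := hLip 0 1
    norm_num at h
    exact le_trans (abs_nonneg _) h
  -- integrability of the two singular integrands on [0, t]
  have hint1 : IntervalIntegrable (fun u : ℝ => u ^ (α - 1) * g (t - u)) volume 0 t :=
    (intervalIntegrable_rpow' (by linarith)).mul_continuousOn
      ((hg.comp (continuous_const.sub continuous_id)).continuousOn)
  have hint2 : IntervalIntegrable (fun u : ℝ => u ^ (α - 2) * (F (t - u) - F t))
      volume 0 t := by
    rw [intervalIntegrable_iff_integrableOn_Ioc_of_le ht.le]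
    have base : IntegrableOn (fun u : ℝ => L * u ^ (α - 1)) (Ioc 0 t) := by
      have := (intervalIntegrable_rpow' (by linarith : (-1:ℝ) < α - 1)
        (a := 0) (b := t)).const_mul L
      rwa [intervalIntegrable_iff_integrableOn_Ioc_of_le ht.le] at this
    refine base.mono' ?_ ?_
    · refine (ContinuousOn.mul ?_ ?_).aestronglyMeasurable measurableSet_Ioc
      · exact ContinuousOn.rpow_const continuousOn_id
          (fun x hx => Or.inl (ne_of_gt hx.1))
      · exact ((hFc.comp (continuous_const.sub continuous_id)).sub
          continuous_const).continuousOn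
    · filter_upwards [ae_restrict_mem measurableSet_Ioc] with u hu
      have hu0 : (0:ℝ) < u := hu.1
      have h1 : |F (t - u) - F t| ≤ L * u := by
        have := hLip t (t - u)
        simpa [abs_of_pos hu0] using this
      have h2 : |u ^ (α - 2)| = u ^ (α - 2) := abs_of_nonneg (Real.rpow_nonneg hu0.le _)
      rw [Real.norm_eq_abs, abs_mul, h2]
      calc u ^ (α - 2) * |F (t - u) - F t| ≤ u ^ (α - 2) * (L * u) := by
            exact mul_le_mul_of_nonneg_left h1 (Real.rpow_nonneg hu0.le _)
      _ = L * u ^ (α - 1) := by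
            rw [show α - 1 = (α - 2) + 1 by ring, Real.rpow_add_one hu0.ne']
            ring
  -- change of variables on the LHS
  have cov : ∫ s in (0:ℝ)..t, (t - s) ^ (α - 1) * g s
      = ∫ u in (0:ℝ)..t, u ^ (α - 1) * g (t - u) := by
    have h := intervalIntegral.integral_comp_sub_left
      (a := (0:ℝ)) (b := t) (fun u : ℝ => u ^ (α - 1) * g (t - u)) t
    simp only [sub_zero, sub_self] at h
    rw [← h]
    congr 1
    funext s
    congr 2
    ring
  rw [cov]
  -- the ε-truncated identity
  set I : ℝ → ℝ := fun ε => ∫ u in ε..t, u ^ (α - 1) * g (t - u) with hI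
  set J : ℝ → ℝ := fun ε => ∫ u in ε..t, u ^ (α - 2) * (F (t - u) - F t) with hJ
  have key : ∀ ε ∈ Ioo (0:ℝ) t,
      I ε = t ^ (α - 1) * F t - ε ^ (α - 1) * (F t - F (t - ε)) + (α - 1) * J ε := by
    intro ε hε
    have hεt : ε ≤ t := hε.2.le
    have huIcc : Set.uIcc ε t = Icc ε t := uIcc_of_le hεt
    have hpos : ∀ x ∈ Set.uIcc ε t, (0:ℝ) < x := by
      intro x hx; rw [huIcc] at hx; exact lt_of_lt_of_le hε.1 hx.1
    have hIBP := intervalIntegral.integral_mul_deriv_eq_deriv_mul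
      (u := fun x : ℝ => x ^ (α - 1)) (u' := fun x : ℝ => (α - 1) * x ^ (α - 2))
      (v := fun x : ℝ => F t - F (t - x)) (v' := fun x : ℝ => g (t - x))
      (a := ε) (b := t)
      (fun x hx => by
        have h := Real.hasDerivAt_rpow_const (x := x) (p := α - 1)
          (Or.inl (hpos x hx).ne')
        simpa [show α - 1 - 1 = α - 2 by ring] using h)
      (fun x hx => by
        have h1 : HasDerivAt (fun y : ℝ => t - y) (-1) x := by
          simpa using (hasDerivAt_id x).const_sub t
        have h2 := (hF (t - x)).comp x h1
        have h3 := h2.const_sub (F t)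
        simpa using h3)
      (by
        apply ContinuousOn.intervalIntegrable
        exact continuousOn_const.mul (ContinuousOn.rpow_const continuousOn_id
          (fun x hx => Or.inl (hpos x hx).ne')))
      ((hg.comp (continuous_const.sub continuous_id)).intervalIntegrable ε t)
    beta_reduce at hIBP
    simp only [sub_self, hF0, sub_zero] at hIBP
    have hflip : ∫ x in ε..t, (α - 1) * x ^ (α - 2) * (F t - F (t - x))
        = -((α - 1) * ∫ x in ε..t, x ^ (α - 2) * (F (t - x) - F t)) := by
      rw [← intervalIntegral.integral_const_mul, ← intervalIntegral.integral_neg]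
      congr 1; funext x; ring
    rw [hflip] at hIBP
    show (∫ u in ε..t, u ^ (α - 1) * g (t - u)) = _
    rw [hIBP]
    show _ = _ + (α - 1) * ∫ u in ε..t, u ^ (α - 2) * (F (t - u) - F t)
    ring
  -- limits as ε → 0⁺
  have hmemIoo : Ioo (0:ℝ) t ∈ nhdsWithin (0:ℝ) (Ioi 0) := by
    rw [← nhdsWithin_Ioo_eq_nhdsGT ht]
    exact self_mem_nhdsWithin
  have tendI : Tendsto I (nhdsWithin 0 (Ioi 0)) (nhds (I 0)) :=
    tendsto_intervalIntegral_left ht hint1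
  have tendJ : Tendsto J (nhdsWithin 0 (Ioi 0)) (nhds (J 0)) :=
    tendsto_intervalIntegral_left ht hint2
  have tendB : Tendsto (fun ε : ℝ => ε ^ (α - 1) * (F t - F (t - ε)))
      (nhdsWithin 0 (Ioi 0)) (nhds 0) := by
    apply squeeze_zero_norm' (a := fun ε : ℝ => L * ε ^ α)
    · filter_upwards [self_mem_nhdsWithin] with ε (hε : ε ∈ Ioi (0:ℝ))
      have hε0 : (0:ℝ) < ε := hε
      have h1 : |F t - F (t - ε)| ≤ L * ε := by
        have := hLip (t - ε) t
        simpa [abs_of_pos hε0] using this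
      rw [Real.norm_eq_abs, abs_mul, abs_of_nonneg (Real.rpow_nonneg hε0.le _)]
      calc ε ^ (α - 1) * |F t - F (t - ε)| ≤ ε ^ (α - 1) * (L * ε) :=
            mul_le_mul_of_nonneg_left h1 (Real.rpow_nonneg hε0.le _)
      _ = L * ε ^ α := by
            rw [show α = (α - 1) + 1 by ring, Real.rpow_add_one hε0.ne']
            ring
    · have h0 : Tendsto (fun ε : ℝ => ε ^ α) (nhdsWithin 0 (Ioi 0)) (nhds 0) := by
        have hc := (Real.continuousAt_rpow_const 0 α (Or.inr hα0.le)).continuousWithinAt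
          (s := Ioi (0:ℝ))
        have h00 : (0:ℝ) ^ α = 0 := Real.zero_rpow hα0.ne'
        rw [ContinuousWithinAt, h00] at hc
        exact hc
      simpa using h0.const_mul L
  have tendRHS : Tendsto
      (fun ε : ℝ => t ^ (α - 1) * F t - ε ^ (α - 1) * (F t - F (t - ε)) + (α - 1) * J ε)
      (nhdsWithin 0 (Ioi 0)) (nhds (t ^ (α - 1) * F t - 0 + (α - 1) * J 0)) :=
    ((tendsto_const_nhds.sub tendB).add (tendJ.const_mul _))
  have heq : I =ᶠ[nhdsWithin (0:ℝ) (Ioi 0)]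
      fun ε : ℝ => t ^ (α - 1) * F t - ε ^ (α - 1) * (F t - F (t - ε)) + (α - 1) * J ε := by
    filter_upwards [hmemIoo] with ε hε using key ε hε
  have := tendsto_nhds_unique tendI (tendRHS.congr' heq.symm)
  rw [hI, hJ] at this
  simpa using this

lemma ptwise_bound {α L B : ℝ} {F : ℝ → ℝ}
    (hLip : ∀ a b : ℝ, |F b - F a| ≤ L * |b - a|) (hB : ∀ x, |F x| ≤ B)
    (t : ℝ) {u : ℝ} (hu : 0 < u) :
    ‖u ^ (α - 2) * (F (t - u) - F t)‖ ≤ min (L * u) (2 * B) * u ^ (α - 2) := by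
  have hnn : (0:ℝ) ≤ u ^ (α - 2) := Real.rpow_nonneg hu.le _
  rw [Real.norm_eq_abs, abs_mul, abs_of_nonneg hnn, mul_comm]
  apply mul_le_mul_of_nonneg_right _ hnn
  apply le_min
  · have := hLip t (t - u)
    simpa [abs_of_pos hu] using this
  · calc |F (t - u) - F t| ≤ |F (t - u)| + |F t| := abs_sub _ _
    _ ≤ B + B := add_le_add (hB _) (hB _)
    _ = 2 * B := by ring

lemma bnd_integrable {α L B : ℝ} (hα0 : 0 < α) (hα1 : α < 1) (hL : 0 ≤ L) (hB : 0 ≤ B) :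
    IntegrableOn (fun u : ℝ => min (L * u) (2 * B) * u ^ (α - 2)) (Ioi 0) volume := by
  have hsplit : Ioc (0:ℝ) 1 ∪ Ioi 1 = Ioi 0 := Ioc_union_Ioi_eq_Ioi zero_le_one
  rw [← hsplit, integrableOn_union]
  have hmeas : ∀ s : Set ℝ, MeasurableSet s → s ⊆ Ioi 0 →
      AEStronglyMeasurable (fun u : ℝ => min (L * u) (2 * B) * u ^ (α - 2))
        (volume.restrict s) := by
    intro s hs hsub
    refine ContinuousOn.aestronglyMeasurable ?_ hs
    refine ContinuousOn.mul ((continuous_const.mul continuous_id).min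
      continuous_const).continuousOn ?_
    exact ContinuousOn.rpow_const continuousOn_id
      (fun x hx => Or.inl (ne_of_gt (hsub hx)))
  constructor
  · have base : IntegrableOn (fun u : ℝ => L * u ^ (α - 1)) (Ioc 0 1) := by
      have := (intervalIntegrable_rpow' (by linarith : (-1:ℝ) < α - 1)
        (a := 0) (b := 1)).const_mul L
      rwa [intervalIntegrable_iff_integrableOn_Ioc_of_le zero_le_one] at this
    refine base.mono' (hmeas _ measurableSet_Ioc Ioc_subset_Ioi_self) ?_
    filter_upwards [ae_restrict_mem measurableSet_Ioc] with u hu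
    have hu0 : (0:ℝ) < u := hu.1
    have hnn : (0:ℝ) ≤ u ^ (α - 2) := Real.rpow_nonneg hu0.le _
    have hminnn : (0:ℝ) ≤ min (L * u) (2 * B) :=
      le_min (mul_nonneg hL hu0.le) (by linarith)
    rw [Real.norm_eq_abs, abs_of_nonneg (mul_nonneg hminnn hnn)]
    calc min (L * u) (2 * B) * u ^ (α - 2) ≤ L * u * u ^ (α - 2) :=
          mul_le_mul_of_nonneg_right (min_le_left _ _) hnn
    _ = L * u ^ (α - 1) := by
          rw [show α - 1 = (α - 2) + 1 by ring, Real.rpow_add_one hu0.ne']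
          ring
  · have base : IntegrableOn (fun u : ℝ => 2 * B * u ^ (α - 2)) (Ioi 1) :=
      (integrableOn_Ioi_rpow_of_lt (by linarith : α - 2 < -1) one_pos).const_mul (2 * B)
    refine base.mono' (hmeas _ measurableSet_Ioi (Ioi_subset_Ioi zero_le_one)) ?_
    filter_upwards [ae_restrict_mem measurableSet_Ioi] with u hu
    have hu0 : (0:ℝ) < u := lt_trans one_pos hu
    have hnn : (0:ℝ) ≤ u ^ (α - 2) := Real.rpow_nonneg hu0.le _
    have hminnn : (0:ℝ) ≤ min (L * u) (2 * B) :=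
      le_min (mul_nonneg hL hu0.le) (by linarith)
    rw [Real.norm_eq_abs, abs_of_nonneg (mul_nonneg hminnn hnn)]
    exact mul_le_mul_of_nonneg_right (min_le_right _ _) hnn

lemma master_int {α L B : ℝ} (hα0 : 0 < α) (hα1 : α < 1) (hL : 0 ≤ L) (hB : 0 ≤ B)
    {F : ℝ → ℝ} (hFc : Continuous F)
    (hLip : ∀ a b : ℝ, |F b - F a| ≤ L * |b - a|) (hB' : ∀ x, |F x| ≤ B) (t : ℝ) :
    IntegrableOn (fun u : ℝ => u ^ (α - 2) * (F (t - u) - F t)) (Ioi 0) volume := by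
  refine (bnd_integrable hα0 hα1 hL hB).mono' ?_ ?_
  · refine ContinuousOn.aestronglyMeasurable ?_ measurableSet_Ioi
    refine ContinuousOn.mul (ContinuousOn.rpow_const continuousOn_id
      (fun x hx => Or.inl (ne_of_gt hx))) ?_
    exact ((hFc.comp (continuous_const.sub continuous_id)).sub continuous_const).continuousOn
  · filter_upwards [ae_restrict_mem measurableSet_Ioi] with u hu
    exact ptwise_bound hLip hB' t hu
theorem rl_integral_asymptotically_periodic (T : ℝ) (hT : 0 < T)
    (f : ℝ → ℝ) (hf : Continuous f) (hper : Function.Periodic f T)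
    (α : ℝ) (hα : α ∈ Set.Ioo (0 : ℝ) 1)
    (Iαf : ℝ → ℝ)
    (hIαf : ∀ t : ℝ, Iαf t = (1 / Real.Gamma α) * ∫ s in (0 : ℝ)..t, (t - s) ^ (α - 1) * f s)
    (hbdd : ∃ M : ℝ, ∀ t ∈ Ioi (0 : ℝ), |Iαf t| ≤ M) :
    ∃ Φ : ℝ → ℝ, Continuous Φ ∧ Function.Periodic Φ T ∧
      Tendsto (fun t : ℝ => Iαf t - Φ t) atTop (nhds 0) := by
  obtain ⟨hα0, hα1⟩ := hα
  obtain ⟨M, hM⟩ := hbdd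
  set c : ℝ := 1 / Real.Gamma α with hc
  have hΓ : 0 < Real.Gamma α := Real.Gamma_pos_of_pos hα0
  have hc0 : c ≠ 0 := by
    rw [hc]; positivity
  set m : ℝ := ∫ u in (0:ℝ)..T, f u with hm
  set g : ℝ → ℝ := fun s => f s - m / T with hgdef
  have hgc : Continuous g := hf.sub continuous_const
  have hgper : Function.Periodic g T := fun s => by simp [hgdef, hper s]
  set F : ℝ → ℝ := fun s => ∫ u in (0:ℝ)..s, g u with hFdef
  have hFderiv : ∀ x : ℝ, HasDerivAt F (g x) x := fun x =>
    (hgc.integral_hasStrictDerivAt 0 x).hasDerivAt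
  have hFc : Continuous F := by
    rw [continuous_iff_continuousAt]; exact fun x => (hFderiv x).continuousAt
  have hF0 : F 0 = 0 := intervalIntegral.integral_same
  obtain ⟨L, hL0, hLbd⟩ := bdd_of_periodic hgc hT hgper
  have hLip : ∀ a b : ℝ, |F b - F a| ≤ L * |b - a| := by
    intro a b
    have hadj := intervalIntegral.integral_add_adjacent_intervals
      (hgc.intervalIntegrable (μ := volume) 0 a) (hgc.intervalIntegrable a b)
    have hFab : F b - F a = ∫ u in a..b, g u := by
      rw [hFdef]; simp only []; linarith
    rw [hFab, ← Real.norm_eq_abs]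
    exact intervalIntegral.norm_integral_le_of_norm_le_const fun x _ => hLbd x
  have hFper : Function.Periodic F T := by
    intro s
    have hzero : ∫ u in s..(s + T), g u = 0 := by
      rw [hgper.intervalIntegral_add_eq s 0, zero_add]
      rw [hgdef]
      simp only []
      rw [intervalIntegral.integral_sub (hf.intervalIntegrable 0 T)
        (intervalIntegrable_const (μ := volume))]
      simp only [intervalIntegral.integral_const, sub_zero, smul_eq_mul, ← hm]
      field_simp
      ring
    have hadj := intervalIntegral.integral_add_adjacent_intervals
      (hgc.intervalIntegrable (μ := volume) 0 s) (hgc.intervalIntegrable s (s + T))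
    show F (s + T) = F s
    rw [hFdef]; simp only []
    rw [← hadj, hzero, add_zero]
  obtain ⟨B, hB0, hBbd⟩ := bdd_of_periodic hFc hT hFper
  set K : ℝ → ℝ := fun t => ∫ u in (0:ℝ)..t, u ^ (α - 2) * (F (t - u) - F t) with hKdef
  have hker : ∀ t : ℝ, 0 < t → IntervalIntegrable (fun s => (t - s) ^ (α - 1)) volume 0 t := by
    intro t ht
    have h := (intervalIntegrable_rpow' (by linarith : (-1:ℝ) < α - 1)
      (a := 0) (b := t)).comp_sub_left t
    simp only [sub_zero, sub_self] at h
    exact h.symm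
  have hKint : ∀ t : ℝ, ∀ a b : ℝ, 0 ≤ a → 0 ≤ b →
      IntervalIntegrable (fun u => u ^ (α - 2) * (F (t - u) - F t)) volume a b := by
    intro t a b ha hb
    have hmaster := master_int hα0 hα1 hL0 hB0 hFc hLip hBbd t
    rcases le_or_gt a b with hab | hab
    · rw [intervalIntegrable_iff_integrableOn_Ioc_of_le hab]
      exact hmaster.mono_set fun x hx => lt_of_le_of_lt ha hx.1
    · apply IntervalIntegrable.symm
      rw [intervalIntegrable_iff_integrableOn_Ioc_of_le hab.le]
      exact hmaster.mono_set fun x hx => lt_of_le_of_lt hb hx.1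
  have eq1 : ∀ t : ℝ, 0 < t →
      Iαf t = c * (m / T) * (t ^ α / α) + c * (t ^ (α - 1) * F t) + c * (α - 1) * K t := by
    intro t ht
    have hkint := hker t ht
    have hstep1 : ∫ s in (0:ℝ)..t, (t - s) ^ (α - 1) * f s
        = (∫ s in (0:ℝ)..t, (t - s) ^ (α - 1) * g s)
          + ∫ s in (0:ℝ)..t, (t - s) ^ (α - 1) * (m / T) := by
      rw [← intervalIntegral.integral_add (hkint.mul_continuousOn hgc.continuousOn)
        (hkint.mul_const _)]
      congr 1
      funext s
      rw [hgdef]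
      ring
    have hstep2 : ∫ s in (0:ℝ)..t, (t - s) ^ (α - 1) * (m / T)
        = (m / T) * (t ^ α / α) := by
      rw [intervalIntegral.integral_mul_const]
      have hcov := intervalIntegral.integral_comp_sub_left
        (a := (0:ℝ)) (b := t) (fun u : ℝ => u ^ (α - 1)) t
      simp only [sub_zero, sub_self] at hcov
      rw [hcov, integral_rpow (Or.inl (by linarith : (-1:ℝ) < α - 1))]
      rw [show α - 1 + 1 = α by ring, Real.zero_rpow hα0.ne']
      ring
    have hstep3 := ibp_key hα0 hα1 hgc hFderiv hF0 hLip ht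
    rw [hIαf t, hstep1, hstep2, hstep3]
    show _ = _ + _ + c * (α - 1) * ∫ (u : ℝ) in (0:ℝ)..t, u ^ (α - 2) * (F (t - u) - F t)
    ring
  have hKbd : ∀ t : ℝ, 1 ≤ t → |K t| ≤ L * (1 / α) + 2 * B / (1 - α) := by
    intro t ht1
    have h01 := hKint t 0 1 le_rfl zero_le_one
    have h1t := hKint t 1 t zero_le_one (by linarith)
    have hsplitK : K t = (∫ u in (0:ℝ)..1, u ^ (α - 2) * (F (t - u) - F t))
        + ∫ u in (1:ℝ)..t, u ^ (α - 2) * (F (t - u) - F t) :=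
      (intervalIntegral.integral_add_adjacent_intervals h01 h1t).symm
    have hb1 : |∫ u in (0:ℝ)..1, u ^ (α - 2) * (F (t - u) - F t)| ≤ L * (1 / α) := by
      have hgint : IntervalIntegrable (fun u : ℝ => L * u ^ (α - 1)) volume 0 1 :=
        (intervalIntegrable_rpow' (by linarith : (-1:ℝ) < α - 1)).const_mul L
      have hval : ∫ u in (0:ℝ)..1, L * u ^ (α - 1) = L * (1 / α) := by
        rw [intervalIntegral.integral_const_mul,
          integral_rpow (Or.inl (by linarith : (-1:ℝ) < α - 1)),
          show α - 1 + 1 = α by ring, Real.zero_rpow hα0.ne', Real.one_rpow]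
        ring
      have hae : ∀ᵐ u ∂volume.restrict (Set.uIoc (0:ℝ) 1),
          ‖u ^ (α - 2) * (F (t - u) - F t)‖ ≤ L * u ^ (α - 1) := by
        rw [uIoc_of_le (zero_le_one : (0:ℝ) ≤ 1)]
        filter_upwards [ae_restrict_mem measurableSet_Ioc] with u hu
        have hu0 : (0:ℝ) < u := hu.1
        have h1 : |F (t - u) - F t| ≤ L * u := by
          have := hLip t (t - u)
          simpa [abs_of_pos hu0] using this
        rw [Real.norm_eq_abs, abs_mul, abs_of_nonneg (Real.rpow_nonneg hu0.le _)]
        calc u ^ (α - 2) * |F (t - u) - F t| ≤ u ^ (α - 2) * (L * u) :=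
              mul_le_mul_of_nonneg_left h1 (Real.rpow_nonneg hu0.le _)
        _ = L * u ^ (α - 1) := by
              rw [show α - 1 = (α - 2) + 1 by ring, Real.rpow_add_one hu0.ne']
              ring
      have := intervalIntegral.norm_integral_le_abs_of_norm_le hae hgint
      rw [hval] at this
      calc |∫ u in (0:ℝ)..1, u ^ (α - 2) * (F (t - u) - F t)| ≤ |L * (1 / α)| := this
      _ = L * (1 / α) := abs_of_nonneg (by positivity)
    have hb2 : |∫ u in (1:ℝ)..t, u ^ (α - 2) * (F (t - u) - F t)| ≤ 2 * B / (1 - α) := by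
      have hgint : IntervalIntegrable (fun u : ℝ => 2 * B * u ^ (α - 2)) volume 1 t := by
        apply ContinuousOn.intervalIntegrable
        apply continuousOn_const.mul
        apply ContinuousOn.rpow_const continuousOn_id
        intro x hx
        rw [uIcc_of_le ht1] at hx
        exact Or.inl (ne_of_gt (by linarith [hx.1] : (0:ℝ) < x))
      have hne1 : α - 2 ≠ -1 := ne_of_lt (by linarith)
      have h0mem : (0:ℝ) ∉ Set.uIcc (1:ℝ) t := by
        rw [uIcc_of_le ht1]
        intro hmem
        exact absurd hmem.1 (by norm_num)
      have hval : ∫ u in (1:ℝ)..t, 2 * B * u ^ (α - 2)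
          = 2 * B * ((t ^ (α - 1) - 1) / (α - 1)) := by
        rw [intervalIntegral.integral_const_mul, integral_rpow (Or.inr ⟨hne1, h0mem⟩),
          show α - 2 + 1 = α - 1 by ring, Real.one_rpow]
      have hae : ∀ᵐ u ∂volume.restrict (Set.uIoc (1:ℝ) t),
          ‖u ^ (α - 2) * (F (t - u) - F t)‖ ≤ 2 * B * u ^ (α - 2) := by
        rw [uIoc_of_le ht1]
        filter_upwards [ae_restrict_mem measurableSet_Ioc] with u hu
        have hu0 : (0:ℝ) < u := lt_trans one_pos hu.1
        have hnn : (0:ℝ) ≤ u ^ (α - 2) := Real.rpow_nonneg hu0.le _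
        rw [Real.norm_eq_abs, abs_mul, abs_of_nonneg hnn]
        calc u ^ (α - 2) * |F (t - u) - F t| ≤ u ^ (α - 2) * (2 * B) := by
              apply mul_le_mul_of_nonneg_left _ hnn
              calc |F (t - u) - F t| ≤ |F (t - u)| + |F t| := abs_sub _ _
              _ ≤ B + B := add_le_add (hBbd _) (hBbd _)
              _ = 2 * B := by ring
        _ = 2 * B * u ^ (α - 2) := by ring
      have h := intervalIntegral.norm_integral_le_abs_of_norm_le hae hgint
      rw [hval] at h
      refine le_trans h ?_
      have htpow : (0:ℝ) ≤ t ^ (α - 1) := Real.rpow_nonneg (by linarith) _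
      have htpow1 : t ^ (α - 1) ≤ 1 :=
        Real.rpow_le_one_of_one_le_of_nonpos ht1 (by linarith)
      have heq2 : 2 * B * ((t ^ (α - 1) - 1) / (α - 1))
          = 2 * B * (1 - t ^ (α - 1)) / (1 - α) := by
        rw [mul_div_assoc]
        congr 1
        rw [div_eq_div_iff (by intro h; exact absurd h (ne_of_lt (by linarith)))
          (by intro h; exact absurd h (ne_of_gt (by linarith)))]
        ring
      have hnn2 : 0 ≤ 2 * B * (1 - t ^ (α - 1)) / (1 - α) := by
        apply div_nonneg _ (by linarith)
        have : 0 ≤ 1 - t ^ (α - 1) := by linarith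
        positivity
      rw [heq2, abs_of_nonneg hnn2, div_le_div_iff₀ (by linarith) (by linarith)]
      nlinarith [mul_nonneg (mul_nonneg hB0 htpow) (by linarith : (0:ℝ) ≤ 1 - α)]
    calc |K t| ≤ |∫ u in (0:ℝ)..1, u ^ (α - 2) * (F (t - u) - F t)|
        + |∫ u in (1:ℝ)..t, u ^ (α - 2) * (F (t - u) - F t)| := by
          rw [hsplitK]; exact abs_add_le _ _
    _ ≤ L * (1 / α) + 2 * B / (1 - α) := add_le_add hb1 hb2
  have hm0 : m = 0 := by
    by_contra hmne
    set a : ℝ := c * (m / T) / α with hadef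
    have ha0 : a ≠ 0 := by
      rw [hadef]
      intro h
      rcases div_eq_zero_iff.mp h with h' | h'
      · rcases mul_eq_zero.mp h' with h'' | h''
        · exact hc0 h''
        · rcases div_eq_zero_iff.mp h'' with h3 | h3
          · exact hmne h3
          · exact hT.ne' h3
      · exact hα0.ne' h'
    set M' : ℝ := M + |c| * (B + (1 - α) * (L * (1 / α) + 2 * B / (1 - α))) with hM'def
    have hbound : ∀ t : ℝ, 1 ≤ t → |a| * t ^ α ≤ M' := by
      intro t ht1
      have ht : (0:ℝ) < t := lt_of_lt_of_le one_pos ht1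
      have heq := eq1 t ht
      have h1 : a * t ^ α = Iαf t - (c * (t ^ (α - 1) * F t) + c * (α - 1) * K t) := by
        rw [heq, hadef]; ring
      have h2 : |c * (t ^ (α - 1) * F t)| ≤ |c| * B := by
        rw [abs_mul]
        apply mul_le_mul_of_nonneg_left _ (abs_nonneg c)
        rw [abs_mul]
        have htpow : |t ^ (α - 1)| ≤ 1 := by
          rw [abs_of_nonneg (Real.rpow_nonneg ht.le _)]
          exact Real.rpow_le_one_of_one_le_of_nonpos ht1 (by linarith)
        calc |t ^ (α - 1)| * |F t| ≤ 1 * B :=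
          mul_le_mul htpow (hBbd t) (abs_nonneg _) zero_le_one
        _ = B := one_mul B
      have h3 : |c * (α - 1) * K t| ≤ |c| * ((1 - α) * (L * (1 / α) + 2 * B / (1 - α))) := by
        rw [abs_mul, abs_mul, abs_of_neg (by linarith : α - 1 < 0)]
        rw [mul_assoc]
        apply mul_le_mul_of_nonneg_left _ (abs_nonneg c)
        rw [show -(α - 1) = 1 - α by ring]
        exact mul_le_mul_of_nonneg_left (hKbd t ht1) (by linarith)
      calc |a| * t ^ α = |a * t ^ α| := by
            rw [abs_mul, abs_of_nonneg (Real.rpow_nonneg ht.le _)]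
      _ = |Iαf t - (c * (t ^ (α - 1) * F t) + c * (α - 1) * K t)| := by rw [h1]
      _ ≤ |Iαf t| + (|c * (t ^ (α - 1) * F t)| + |c * (α - 1) * K t|) :=
            le_trans (abs_sub _ _) (by gcongr; exact abs_add_le _ _)
      _ ≤ M + (|c| * B + |c| * ((1 - α) * (L * (1 / α) + 2 * B / (1 - α)))) :=
            add_le_add (hM t ht) (add_le_add h2 h3)
      _ = M' := by rw [hM'def]; ring
    have haT : Tendsto (fun t : ℝ => t ^ α) atTop atTop := tendsto_rpow_atTop hα0
    obtain ⟨t, ht1, htbig⟩ :=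
      ((haT.eventually_gt_atTop (M' / |a|)).and (eventually_ge_atTop (1:ℝ))).exists
    have := hbound t htbig
    have habs : 0 < |a| := abs_pos.mpr ha0
    rw [div_lt_iff₀ habs] at ht1
    nlinarith
  set Φ : ℝ → ℝ := fun t =>
    c * ((α - 1) * ∫ u in Ioi (0:ℝ), u ^ (α - 2) * (F (t - u) - F t)) with hΦdef
  have hΦc : Continuous Φ := by
    have hcont : Continuous fun x : ℝ =>
        ∫ u in Ioi (0:ℝ), u ^ (α - 2) * (F (x - u) - F x) := by
      apply continuous_of_dominated (bound := fun u => min (L * u) (2 * B) * u ^ (α - 2))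
      · intro x
        refine ContinuousOn.aestronglyMeasurable ?_ measurableSet_Ioi
        refine ContinuousOn.mul (ContinuousOn.rpow_const continuousOn_id
          (fun y hy => Or.inl (ne_of_gt hy))) ?_
        exact ((hFc.comp (continuous_const.sub continuous_id)).sub
          continuous_const).continuousOn
      · intro x
        filter_upwards [ae_restrict_mem measurableSet_Ioi] with u hu
        exact ptwise_bound hLip hBbd x hu
      · exact bnd_integrable hα0 hα1 hL0 hB0
      · apply Eventually.of_forall
        intro u
        exact continuous_const.mul
          ((hFc.comp (continuous_id.sub continuous_const)).sub hFc)
    exact continuous_const.mul (continuous_const.mul hcont)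
  have hΦper : Function.Periodic Φ T := by
    intro t
    have hfun : (fun u : ℝ => u ^ (α - 2) * (F (t + T - u) - F (t + T)))
        = fun u : ℝ => u ^ (α - 2) * (F (t - u) - F t) := by
      funext u
      rw [show t + T - u = (t - u) + T by ring, hFper (t - u), hFper t]
    show c * ((α - 1) * ∫ u in Ioi (0:ℝ), u ^ (α - 2) * (F (t + T - u) - F (t + T)))
        = c * ((α - 1) * ∫ u in Ioi (0:ℝ), u ^ (α - 2) * (F (t - u) - F t))
    rw [hfun]
  refine ⟨Φ, hΦc, hΦper, ?_⟩
  have hαne : α - 1 ≠ 0 := ne_of_lt (by linarith)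
  have hαne' : (1:ℝ) - α ≠ 0 := ne_of_gt (by linarith)
  have hmain : ∀ t : ℝ, 0 < t →
      Iαf t - Φ t = c * (t ^ (α - 1) * F t)
        - c * (α - 1) * ∫ u in Ioi t, u ^ (α - 2) * (F (t - u) - F t) := by
    intro t ht
    have hmaster := master_int hα0 hα1 hL0 hB0 hFc hLip hBbd t
    have hsplit : ∫ u in Ioi (0:ℝ), u ^ (α - 2) * (F (t - u) - F t)
        = (∫ u in Ioc (0:ℝ) t, u ^ (α - 2) * (F (t - u) - F t))
          + ∫ u in Ioi t, u ^ (α - 2) * (F (t - u) - F t) := by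
      rw [← Ioc_union_Ioi_eq_Ioi ht.le]
      exact setIntegral_union (Ioc_disjoint_Ioi le_rfl) measurableSet_Ioi
        (hmaster.mono_set Ioc_subset_Ioi_self)
        (hmaster.mono_set (Ioi_subset_Ioi ht.le))
    have hKt : K t = ∫ u in Ioc (0:ℝ) t, u ^ (α - 2) * (F (t - u) - F t) :=
      intervalIntegral.integral_of_le ht.le
    have heq := eq1 t ht
    rw [hm0] at heq
    rw [heq]
    show _ = _ - c * (α - 1) * ∫ u in Ioi t, u ^ (α - 2) * (F (t - u) - F t)
    have hΦt : Φ t = c * ((α - 1) *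
        ((∫ u in Ioc (0:ℝ) t, u ^ (α - 2) * (F (t - u) - F t))
          + ∫ u in Ioi t, u ^ (α - 2) * (F (t - u) - F t))) := by
      rw [← hsplit]
    rw [hΦt, hKt]
    ring
  have htend1 : Tendsto (fun t : ℝ => t ^ (α - 1)) atTop (nhds 0) := by
    have h := tendsto_rpow_neg_atTop (by linarith : (0:ℝ) < 1 - α)
    simpa [show -(1 - α) = α - 1 by ring] using h
  have hA : Tendsto (fun t : ℝ => c * (t ^ (α - 1) * F t)) atTop (nhds 0) := by
    apply squeeze_zero_norm' (a := fun t : ℝ => |c| * B * t ^ (α - 1))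
    · filter_upwards [eventually_gt_atTop (0:ℝ)] with t ht
      rw [Real.norm_eq_abs, abs_mul, abs_mul,
        abs_of_nonneg (Real.rpow_nonneg ht.le (α - 1))]
      calc |c| * (t ^ (α - 1) * |F t|) ≤ |c| * (t ^ (α - 1) * B) := by
            apply mul_le_mul_of_nonneg_left _ (abs_nonneg c)
            exact mul_le_mul_of_nonneg_left (hBbd t) (Real.rpow_nonneg ht.le _)
      _ = |c| * B * t ^ (α - 1) := by ring
    · simpa using htend1.const_mul (|c| * B)
  have hR : Tendsto (fun t : ℝ =>
      c * (α - 1) * ∫ u in Ioi t, u ^ (α - 2) * (F (t - u) - F t)) atTop (nhds 0) := by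
    apply squeeze_zero_norm'
      (a := fun t : ℝ => |c * (α - 1)| * (2 * B / (1 - α)) * t ^ (α - 1))
    · filter_upwards [eventually_gt_atTop (0:ℝ)] with t ht
      rw [Real.norm_eq_abs, abs_mul]
      have hint : Integrable (fun u : ℝ => 2 * B * u ^ (α - 2))
          (volume.restrict (Ioi t)) :=
        (integrableOn_Ioi_rpow_of_lt (by linarith : α - 2 < -1) ht).const_mul (2 * B)
      have hae : ∀ᵐ u ∂volume.restrict (Ioi t),
          ‖u ^ (α - 2) * (F (t - u) - F t)‖ ≤ 2 * B * u ^ (α - 2) := by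
        filter_upwards [ae_restrict_mem measurableSet_Ioi] with u hu
        have hu0 : (0:ℝ) < u := lt_trans ht hu
        have hnn : (0:ℝ) ≤ u ^ (α - 2) := Real.rpow_nonneg hu0.le _
        rw [Real.norm_eq_abs, abs_mul, abs_of_nonneg hnn]
        calc u ^ (α - 2) * |F (t - u) - F t| ≤ u ^ (α - 2) * (2 * B) := by
              apply mul_le_mul_of_nonneg_left _ hnn
              calc |F (t - u) - F t| ≤ |F (t - u)| + |F t| := abs_sub _ _
              _ ≤ B + B := add_le_add (hBbd _) (hBbd _)
              _ = 2 * B := by ring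
        _ = 2 * B * u ^ (α - 2) := by ring
      have hb := norm_integral_le_of_norm_le hint hae
      have hval : ∫ u in Ioi t, 2 * B * u ^ (α - 2)
          = 2 * B / (1 - α) * t ^ (α - 1) := by
        rw [MeasureTheory.integral_const_mul, integral_Ioi_rpow_of_lt
          (by linarith : α - 2 < -1) ht, show α - 2 + 1 = α - 1 by ring]
        field_simp
        ring
      rw [Real.norm_eq_abs] at hb
      rw [hval] at hb
      calc |c * (α - 1)| * |∫ u in Ioi t, u ^ (α - 2) * (F (t - u) - F t)|
          ≤ |c * (α - 1)| * (2 * B / (1 - α) * t ^ (α - 1)) :=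
            mul_le_mul_of_nonneg_left hb (abs_nonneg _)
      _ = |c * (α - 1)| * (2 * B / (1 - α)) * t ^ (α - 1) := by ring
    · simpa using htend1.const_mul (|c * (α - 1)| * (2 * B / (1 - α)))
  have hcomb := hA.sub hR
  rw [sub_zero] at hcomb
  apply hcomb.congr'
  filter_upwards [eventually_gt_atTop (0:ℝ)] with t ht
  exact (hmain t ht).symm
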